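/- Let p and p̃ be probability densities on ℝ with continuous, strictly increasing cdfs F and F̃. If the rank statistic A_K (of an independent p-sample among K i.i.d. p̃-samples) is uniform on {0,…,K} for every K ∈ ℕ, then F = F̃, and hence p = p̃ almost everywhere. -/

import Mathlib

open MeasureTheory ProbabilityTheory Set BoundedContinuousFunction
open scoped ENNReal NNReal


-- no atoms lemma
lemma meas_singleton_zero (ν : Measure ℝ) [IsProbabilityMeasure ν]
    (h : Continuous (cdf ν)) (y : ℝ) : ν {y} = 0 := by
  have key : ∀ x < y, ν {y} ≤ ENNReal.ofReal (cdf ν y - cdf ν x) := by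
    intro x hx
    have h1 : ν {y} ≤ ν (Ioc x y) := measure_mono (by simp [hx])
    have h2 : ν (Ioc x y) = ν (Iic y) - ν (Iic x) := by
      rw [← Iic_sdiff_Iic, measure_diff (Iic_subset_Iic.mpr hx.le) measurableSet_Iic.nullMeasurableSet (measure_ne_top ν _)]
    rw [h2, ← ofReal_cdf, ← ofReal_cdf, ← ENNReal.ofReal_sub _ (cdf_nonneg ν x)] at h1
    exact h1
  have hseq : Filter.Tendsto (fun n : ℕ => ENNReal.ofReal (cdf ν y - cdf ν (y - 1/(n+1)))) Filter.atTop (nhds 0) := by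
    have h1 : Filter.Tendsto (fun n : ℕ => y - 1/(n+1)) Filter.atTop (nhds y) := by
      have := tendsto_one_div_add_atTop_nhds_zero_nat (𝕜 := ℝ)
      have := (tendsto_const_nhds (x := y)).sub this
      simpa using this
    have h2 := (h.tendsto y).comp h1
    have h3 : Filter.Tendsto (fun n : ℕ => cdf ν y - cdf ν (y - 1/(n+1))) Filter.atTop (nhds 0) := by
      simpa using (tendsto_const_nhds (x := cdf ν y)).sub h2
    simpa [Function.comp_def] using (ENNReal.continuous_ofReal.tendsto 0).comp h3
  refine le_antisymm ?_ (zero_le)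
  refine ge_of_tendsto hseq ?_
  filter_upwards with n
  refine key _ ?_
  have : (0:ℝ) < 1/(n+1) := by positivity
  linarith

lemma meas_Iio_eq (ν : Measure ℝ) [IsProbabilityMeasure ν]
    (h : Continuous (cdf ν)) (y : ℝ) : ν (Iio y) = ENNReal.ofReal (cdf ν y) := by
  rw [← Iic_diff_right, measure_diff_null (meas_singleton_zero ν h y), ofReal_cdf]

lemma joint_law_pi {Ω : Type*} [MeasurableSpace Ω] (P : Measure Ω) [IsProbabilityMeasure P]
    {n : ℕ} (X : Fin n → Ω → ℝ) (hmeas : ∀ i, Measurable (X i))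
    (hindep : iIndepFun X P) :
    Measure.map (fun ω i => X i ω) P = Measure.pi (fun i => Measure.map (X i) P) := by
  haveI : ∀ i, SigmaFinite (Measure.map (X i) P) := fun i => by
    have := Measure.isProbabilityMeasure_map (hmeas i).aemeasurable (f := X i) (μ := P)
    infer_instance
  refine (Measure.pi_eq (μ := fun i => Measure.map (X i) P) fun s hs => ?_).symm
  have hT : Measurable (fun ω i => X i ω) := measurable_pi_iff.mpr hmeas
  rw [Measure.map_apply hT (MeasurableSet.univ_pi hs)]
  have : (fun ω i => X i ω) ⁻¹' (Set.pi univ s) = ⋂ i ∈ Finset.univ, X i ⁻¹' s i := by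
    ext ω; simp [Set.mem_pi]
  rw [this, hindep.measure_inter_preimage_eq_mul Finset.univ (fun i _ => hs i)]
  exact Finset.prod_congr rfl fun i _ => (Measure.map_apply (hmeas i) (hs i)).symm

lemma eq_uniform_of_moments (η : Measure ℝ) [IsProbabilityMeasure η]
    (hsupp : η (Icc (0:ℝ) 1)ᶜ = 0)
    (hmom : ∀ n : ℕ, ∫ x, x^n ∂η = 1/(n+1)) :
    η = volume.restrict (Icc (0:ℝ) 1) := by
  set Λ : Measure ℝ := volume.restrict (Icc (0:ℝ) 1) with hΛ
  haveI : IsProbabilityMeasure Λ := ⟨by simp [hΛ, Real.volume_Icc]⟩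
  have haeη : ∀ᵐ x ∂η, x ∈ Icc (0:ℝ) 1 := by
    rw [ae_iff]; simpa [compl_def] using hsupp
  have haeΛ : ∀ᵐ x ∂Λ, x ∈ Icc (0:ℝ) 1 := ae_restrict_mem measurableSet_Icc
  -- integrability of continuous functions wrt measures supported in [0,1]
  have hint : ∀ (m : Measure ℝ), IsFiniteMeasure m → (∀ᵐ x ∂m, x ∈ Icc (0:ℝ) 1) →
      ∀ f : ℝ → ℝ, Continuous f → Integrable f m := by
    intro m hm hae f hf
    obtain ⟨C, hC⟩ := (isCompact_Icc (a := (0:ℝ)) (b := 1)).exists_bound_of_continuousOn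
      hf.continuousOn
    exact ⟨hf.aestronglyMeasurable,
      HasFiniteIntegral.of_bounded (C := C) (hae.mono fun x hx => hC x hx)⟩
  -- moments of Λ
  have hmomΛ : ∀ n : ℕ, ∫ x, x^n ∂Λ = 1/(n+1) := by
    intro n
    have : ∫ x, x^n ∂Λ = ∫ x in Icc (0:ℝ) 1, x^n := rfl
    rw [this, integral_Icc_eq_integral_Ioc, ← intervalIntegral.integral_of_le zero_le_one,
      integral_pow]
    norm_num
  -- polynomials have equal integrals
  have hpoly : ∀ p : Polynomial ℝ, ∫ x, p.eval x ∂η = ∫ x, p.eval x ∂Λ := by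
    intro p
    have hev : ∀ x : ℝ, p.eval x
        = ∑ i ∈ Finset.range (p.natDegree + 1), p.coeff i * x ^ i := by
      intro x; exact Polynomial.eval_eq_sum_range x
    have key : ∀ (m : Measure ℝ), IsFiniteMeasure m → (∀ᵐ x ∂m, x ∈ Icc (0:ℝ) 1) →
        ∫ x, p.eval x ∂m = ∑ i ∈ Finset.range (p.natDegree + 1), p.coeff i * ∫ x, x ^ i ∂m := by
      intro m hm hae
      simp_rw [hev]
      rw [integral_finset_sum]
      · exact Finset.sum_congr rfl fun i _ => by rw [integral_const_mul]
      · intro i _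
        exact (hint m hm hae _ (continuous_pow i)).const_mul _
    rw [key η (by infer_instance) haeη, key Λ (by infer_instance) haeΛ]
    refine Finset.sum_congr rfl fun i _ => ?_
    rw [hmom i, hmomΛ i]
  -- continuous bounded functions have equal integrals
  have hcont : ∀ g : ℝ → ℝ, Continuous g → ∫ x, g x ∂η = ∫ x, g x ∂Λ := by
    intro g hg
    have hgη : Integrable g η := hint η (by infer_instance) haeη g hg
    have hgΛ : Integrable g Λ := hint Λ (by infer_instance) haeΛ g hg
    have hd : ∀ ε > (0:ℝ), |∫ x, g x ∂η - ∫ x, g x ∂Λ| ≤ 0 + 2*ε := by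
      intro ε hε
      obtain ⟨p, hp⟩ := exists_polynomial_near_of_continuousOn 0 1 g hg.continuousOn ε hε
      have hpC : Continuous fun x => Polynomial.eval x p := p.continuous
      have hbd : ∀ (m : Measure ℝ), IsProbabilityMeasure m → (∀ᵐ x ∂m, x ∈ Icc (0:ℝ) 1) →
          Integrable g m → |∫ x, g x ∂m - ∫ x, p.eval x ∂m| ≤ ε := by
        intro m hm hae hgi
        rw [← integral_sub hgi (hint m (by infer_instance) hae _ hpC)]
        have := norm_integral_le_of_norm_le_const (μ := m)
          (f := fun x => g x - p.eval x) (C := ε)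
          (hae.mono fun x hx => by
            have := hp x hx
            rw [Real.norm_eq_abs, abs_sub_comm]
            exact (le_of_lt this))
        simpa using this
      have h1 := hbd η (by infer_instance) haeη hgη
      have h2 := hbd Λ (by infer_instance) haeΛ hgΛ
      have h3 := hpoly p
      calc |∫ x, g x ∂η - ∫ x, g x ∂Λ|
          ≤ |∫ x, g x ∂η - ∫ x, p.eval x ∂η| + |∫ x, p.eval x ∂Λ - ∫ x, g x ∂Λ| := by
            calc |∫ x, g x ∂η - ∫ x, g x ∂Λ|
                = |(∫ x, g x ∂η - ∫ x, p.eval x ∂Λ) + (∫ x, p.eval x ∂Λ - ∫ x, g x ∂Λ)| := by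
                  ring_nf
              _ ≤ |∫ x, g x ∂η - ∫ x, p.eval x ∂Λ| + |∫ x, p.eval x ∂Λ - ∫ x, g x ∂Λ| :=
                  abs_add_le _ _
              _ = _ := by rw [← h3]
        _ ≤ ε + ε := add_le_add h1 (by rw [abs_sub_comm]; exact h2)
        _ = 0 + 2*ε := by ring
    have : |∫ x, g x ∂η - ∫ x, g x ∂Λ| ≤ 0 := by
      refine le_of_forall_pos_le_add fun ε hε => ?_
      have := hd (ε/2) (by linarith)
      linarith
    have hnn := abs_nonneg (∫ x, g x ∂η - ∫ x, g x ∂Λ)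
    have h0 : |∫ x, g x ∂η - ∫ x, g x ∂Λ| = 0 := le_antisymm this hnn
    have := abs_eq_zero.mp h0
    linarith
  -- conclude via lintegrals of bounded continuous ℝ≥0 functions
  refine ext_of_forall_lintegral_eq_of_IsFiniteMeasure fun f => ?_
  have h1 : (∫⁻ x, (f x : ℝ≥0∞) ∂η) ≠ ⊤ := (lintegral_lt_top_of_nnreal η f).ne
  have h2 : (∫⁻ x, (f x : ℝ≥0∞) ∂Λ) ≠ ⊤ := (lintegral_lt_top_of_nnreal Λ f).ne
  rw [← ENNReal.toReal_eq_toReal_iff' h1 h2, toReal_lintegral_coe_eq_integral,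
    toReal_lintegral_coe_eq_integral]
  exact hcont _ (NNReal.continuous_coe.comp f.continuous)



-- pi measure of the "all below last" set
lemma pi_all_lt_last (μ ν : Measure ℝ) [IsProbabilityMeasure μ] [IsProbabilityMeasure ν]
    (K : ℕ) (L : Fin (K+1) → Measure ℝ) (hL : ∀ i, IsProbabilityMeasure (L i))
    (hLc : ∀ i : Fin K, L i.castSucc = ν) (hLl : L (Fin.last K) = μ) :
    Measure.pi L {f : Fin (K+1) → ℝ | ∀ i : Fin K, f i.castSucc < f (Fin.last K)}
      = ∫⁻ y, (ν (Iio y))^K ∂μ := by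
  haveI := hL
  set e := MeasurableEquiv.piFinSuccAbove (fun _ : Fin (K+1) => ℝ) (Fin.last K) with he
  have hmp := measurePreserving_piFinSuccAbove L (Fin.last K)
  set S2 : Set (ℝ × (Fin K → ℝ)) := {q | ∀ j : Fin K, q.2 j < q.1} with hS2def
  have hS2 : MeasurableSet S2 := by
    have : S2 = ⋂ j : Fin K, {q : ℝ × (Fin K → ℝ) | q.2 j < q.1} := by ext q; simp [hS2def]
    rw [this]
    exact MeasurableSet.iInter fun j =>
      measurableSet_lt (by fun_prop) (by fun_prop)
  have hpre : e ⁻¹' S2 = {f : Fin (K+1) → ℝ | ∀ i : Fin K, f i.castSucc < f (Fin.last K)} := by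
    ext f
    simp [hS2def, e, MeasurableEquiv.piFinSuccAbove, Fin.succAbove_last, Fin.removeNth, Fin.init]
  rw [← hpre, hmp.measure_preimage hS2.nullMeasurableSet]
  have hprodeq : (fun j : Fin K => L ((Fin.last K).succAbove j)) = fun _ => ν := by
    funext j; rw [Fin.succAbove_last]; exact hLc j
  rw [hLl, hprodeq]
  rw [Measure.prod_apply hS2]
  congr 1
  funext y
  have : (Prod.mk y ⁻¹' S2) = Set.pi univ (fun _ : Fin K => Iio y) := by
    ext x; simp [hS2def]
  rw [this, Measure.pi_pi]
  simp [Finset.prod_const]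

lemma filter_card_eq_iff {α} [Fintype α] (p : α → Prop) [DecidablePred p] :
    (Finset.univ.filter p).card = Fintype.card α ↔ ∀ x, p x := by
  rw [Finset.card_eq_iff_eq_univ, Finset.eq_univ_iff_forall]; simp

/-- **Converse theorem.** Let `μ` (density `p`) and `ν` (density `p̃`) be probability measures
on `ℝ` with continuous strictly increasing cdfs `F` and `F̃`.  If for every `K` the rank
statistic `A_K` of an independent `μ`-sample among `K` i.i.d. `ν`-samples is uniform on
`{0, …, K}`, then `F = F̃`, and hence the distributions coincide (`p = p̃` a.e.). -/
theorem uniform_rank_all_K_implies_eq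
    {Ω : Type*} [MeasurableSpace Ω] (P : Measure Ω) [IsProbabilityMeasure P]
    (μ ν : Measure ℝ) [IsProbabilityMeasure μ] [IsProbabilityMeasure ν]
    (hFcont : Continuous (cdf μ)) (hFmono : StrictMono (cdf μ))
    (hF'cont : Continuous (cdf ν)) (hF'mono : StrictMono (cdf ν))
    (X : (K : ℕ) → Fin (K + 1) → Ω → ℝ)
    (hmeas : ∀ K i, Measurable (X K i))
    (hindep : ∀ K, iIndepFun (X K) P)
    (hlawν : ∀ K, ∀ i : Fin K, Measure.map (X K i.castSucc) P = ν)
    (hlawμ : ∀ K, Measure.map (X K (Fin.last K)) P = μ)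
    (huniform : ∀ K, ∀ n : ℕ, n ≤ K →
      P {ω | (Finset.univ.filter
          (fun i : Fin K => X K i.castSucc ω < X K (Fin.last K) ω)).card = n}
        = 1 / (K + 1)) :
    (∀ y, cdf μ y = cdf ν y) ∧ μ = ν := by
  set G : ℝ → ℝ := fun y => cdf ν y with hG
  have hGmeas : Measurable G := hF'cont.measurable
  -- Step 1: lintegral moments
  have hmomE : ∀ K : ℕ, ∫⁻ y, (ENNReal.ofReal (G y))^K ∂μ = 1 / (K + 1) := by
    intro K
    set S : Set (Fin (K+1) → ℝ) :=
      {f | ∀ i : Fin K, f i.castSucc < f (Fin.last K)} with hSdef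
    have hS : MeasurableSet S := by
      have : S = ⋂ i : Fin K, {f : Fin (K+1) → ℝ | f i.castSucc < f (Fin.last K)} := by
        ext f; simp [hSdef]
      rw [this]
      exact MeasurableSet.iInter fun i =>
        measurableSet_lt (measurable_pi_apply _) (measurable_pi_apply _)
    have hT : Measurable (fun ω (i : Fin (K+1)) => X K i ω) :=
      measurable_pi_iff.mpr (hmeas K)
    have hA : {ω | (Finset.univ.filter
          (fun i : Fin K => X K i.castSucc ω < X K (Fin.last K) ω)).card = K}
        = (fun ω (i : Fin (K+1)) => X K i ω) ⁻¹' S := by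
      ext ω
      simp only [mem_setOf_eq, mem_preimage, hSdef]
      simpa using filter_card_eq_iff
        (fun i : Fin K => X K i.castSucc ω < X K (Fin.last K) ω)
    have h1 : P ((fun ω (i : Fin (K+1)) => X K i ω) ⁻¹' S) = 1 / (K + 1) := by
      rw [← hA]; exact huniform K K le_rfl
    rw [← Measure.map_apply hT hS] at h1
    rw [joint_law_pi P (X K) (hmeas K) (hindep K)] at h1
    rw [pi_all_lt_last μ ν K _
      (fun i => Measure.isProbabilityMeasure_map (hmeas K i).aemeasurable)
      (fun i => hlawν K i) (hlawμ K)] at h1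
    rw [← h1]
    refine lintegral_congr fun y => ?_
    rw [meas_Iio_eq ν hF'cont y]
  -- Step 2: real moments
  have hmomR : ∀ K : ℕ, ∫ y, (G y)^K ∂μ = 1 / (K + 1) := by
    intro K
    have hnn : 0 ≤ᵐ[μ] fun y => (G y)^K :=
      Filter.Eventually.of_forall fun y => pow_nonneg (cdf_nonneg ν y) K
    have hm : AEStronglyMeasurable (fun y => (G y)^K) μ :=
      ((hF'cont.pow K).aestronglyMeasurable)
    rw [integral_eq_lintegral_of_nonneg_ae hnn hm]
    have : ∀ y : ℝ, ENNReal.ofReal ((G y)^K) = (ENNReal.ofReal (G y))^K := fun y =>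
      ENNReal.ofReal_pow (cdf_nonneg ν y) K
    simp_rw [this, hmomE K]
    rw [ENNReal.toReal_div]
    norm_num
    rw [show ((K:ENNReal)+1) = ((K+1:ℕ):ENNReal) by push_cast; ring, ENNReal.toReal_natCast]
    push_cast; ring
  -- Step 3: pushforward measure and its moments
  set η : Measure ℝ := Measure.map G μ with hη
  haveI : IsProbabilityMeasure η := Measure.isProbabilityMeasure_map hGmeas.aemeasurable
  have hsupp : η (Icc (0:ℝ) 1)ᶜ = 0 := by
    have h1 : η (Icc (0:ℝ) 1) = 1 := by
      rw [hη, Measure.map_apply hGmeas measurableSet_Icc]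
      have : G ⁻¹' (Icc (0:ℝ) 1) = univ := by
        ext y; simp [hG, cdf_nonneg, cdf_le_one]
      rw [this, measure_univ]
    rw [measure_compl measurableSet_Icc (measure_ne_top η _), h1, measure_univ]
    simp
  have hmomη : ∀ n : ℕ, ∫ x, x^n ∂η = 1/(n+1) := by
    intro n
    rw [hη, integral_map hGmeas.aemeasurable
      ((continuous_pow n).aestronglyMeasurable)]
    exact hmomR n
  have hηΛ : η = volume.restrict (Icc (0:ℝ) 1) :=
    eq_uniform_of_moments η hsupp hmomη
  -- Step 4: conclude the cdf equality
  have hcdf : ∀ y, μ (Iic y) = ENNReal.ofReal (G y) := by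
    intro y
    have h1 : Iic y = G ⁻¹' (Iic (G y)) := by
      ext x; simp [hG, (hF'mono.le_iff_le)]
    rw [h1, ← Measure.map_apply hGmeas measurableSet_Iic, ← hη, hηΛ,
      Measure.restrict_apply measurableSet_Iic]
    have h2 : Iic (G y) ∩ Icc (0:ℝ) 1 = Icc 0 (G y) := by
      ext x
      constructor
      · rintro ⟨hx1, hx2, _⟩; exact ⟨hx2, hx1⟩
      · rintro ⟨hx1, hx2⟩; exact ⟨hx2, hx1, le_trans hx2 (cdf_le_one ν y)⟩
    rw [h2, Real.volume_Icc, sub_zero]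
  have hFeq : ∀ y, cdf μ y = cdf ν y := by
    intro y
    rw [cdf_eq_real, measureReal_def, hcdf y, ENNReal.toReal_ofReal (cdf_nonneg ν y)]
  refine ⟨hFeq, ?_⟩
  refine Measure.ext_of_Iic μ ν fun y => ?_
  rw [hcdf y, ofReal_cdf]
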